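/- Let X be a compact metric space, F : X ≃ₜ X a homeomorphism, and μ a Borel measure on X with μ(V) > 0 for every nonempty open set V. Let A be a Milnor attractor of F. Suppose that (i) there is a sequence (γ_j)_{j∈ℕ} of topological sinks of F (each with some trapping neighborhood) such that γ_j → p for some point p ∈ X, and (ii) there is a topological sink γ of F with trapping neighborhood U and a point z ∈ X lying in the basin ⋃_{n≥0} (F^[n])⁻¹' U of γ but not on the orbit O(γ), such that p is a cluster point of the backward orbit ((F⁻¹)^[n](z))_{n∈ℕ}. Then A is not Lyapunov stable for F. (Abstract form of Proposition 3.1 of the paper: the hypotheses 'W^u(p) intersects the basin of a sink' and 'sinks accumulate to p' are expressed via their topological content actually used in the proof.) -/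

import Mathlib

open Set Function Filter Topology MeasureTheory

/-- The ω-limit set of `x` under `F`: `⋂_N closure {F^[n] x : n ≥ N}`. -/
def omegaSet {X : Type*} [TopologicalSpace X] (F : X → X) (x : X) : Set X :=
  ⋂ N : ℕ, closure ((fun n => F^[n] x) '' Set.Ici N)

/-- Lyapunov stability of a set `K` for the map `F`. -/
def IsLyapunovStable {X : Type*} [TopologicalSpace X] (F : X → X) (K : Set X) : Prop :=
  ∀ V : Set X, IsOpen V → K ⊆ V →
    ∃ W : Set X, IsOpen W ∧ K ⊆ W ∧ ∀ x ∈ W, ∀ n : ℕ, F^[n] x ∈ V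

/-- The (forward) orbit of a point; for a periodic point with `F^[m] γ = γ`, `m ≥ 1`,
this coincides with `{F^[i] γ : 0 ≤ i < m}`. -/
def orbitSet {X : Type*} (F : X → X) (γ : X) : Set X := Set.range fun i : ℕ => F^[i] γ

/-- `γ` is a periodic topological sink of `F` with trapping neighborhood `U`. -/
def IsTopSink {X : Type*} [TopologicalSpace X] (F : X → X) (γ : X) (U : Set X) : Prop :=
  (∃ m : ℕ, 1 ≤ m ∧ F^[m] γ = γ) ∧ IsOpen U ∧ orbitSet F γ ⊆ U ∧
    F '' closure U ⊆ U ∧ (⋂ n : ℕ, F^[n] '' U) = orbitSet F γ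

/-- The basin of a trapping neighborhood `U`. -/
def basin {X : Type*} (F : X → X) (U : Set X) : Set X := ⋃ n : ℕ, F^[n] ⁻¹' U

/-- `A` is the Milnor attractor of `F` w.r.t. the measure `μ`. -/
def IsMilnorAttractor {X : Type*} [TopologicalSpace X] [MeasurableSpace X]
    (μ : Measure X) (F : X → X) (A : Set X) : Prop :=
  IsClosed A ∧ (∀ᵐ x ∂μ, omegaSet F x ⊆ A) ∧
    ∀ A' : Set X, IsClosed A' → (∀ᵐ x ∂μ, omegaSet F x ⊆ A') → A ⊆ A'

section Aux
variable {X : Type*} [TopologicalSpace X] {F : X → X}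

lemma mem_omega_tail {x q : X} (hq : q ∈ omegaSet F x) (N : ℕ) :
    q ∈ closure ((fun n => F^[n] x) '' Set.Ici N) := Set.mem_iInter.1 hq N

lemma cont_iter (hF : Continuous F) (n : ℕ) : Continuous (F^[n]) := by
  induction n with
  | zero => exact continuous_id
  | succ n ih => rw [Function.iterate_succ]; exact ih.comp hF

lemma omega_nonempty [CompactSpace X] (x : X) :
    (omegaSet F x).Nonempty := by
  apply IsCompact.nonempty_iInter_of_sequence_nonempty_isCompact_isClosed
    (fun N => closure ((fun n => F^[n] x) '' Set.Ici N))
  · intro n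
    exact closure_mono (Set.image_mono fun m hm => le_trans (Nat.le_succ n) hm)
  · intro n
    exact ⟨F^[n] x, subset_closure ⟨n, le_refl n, rfl⟩⟩
  · exact isClosed_closure.isCompact
  · intro n; exact isClosed_closure

lemma omega_fwd (hF : Continuous F) {x q : X} (hq : q ∈ omegaSet F x) :
    F q ∈ omegaSet F x := by
  apply Set.mem_iInter.2
  intro N
  have h1 : F q ∈ closure (F '' ((fun n => F^[n] x) '' Set.Ici N)) :=
    image_closure_subset_closure_image hF ⟨q, mem_omega_tail hq N, rfl⟩
  refine closure_mono ?_ h1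
  rintro _ ⟨_, ⟨n, hn, rfl⟩, rfl⟩
  exact ⟨n + 1, le_trans hn (Nat.le_succ n), by
    simp [Function.iterate_succ_apply' F n x]⟩

lemma omega_fwd_iter (hF : Continuous F) {x q : X} (hq : q ∈ omegaSet F x) (t : ℕ) :
    F^[t] q ∈ omegaSet F x := by
  induction t with
  | zero => exact hq
  | succ t ih => rw [Function.iterate_succ_apply']; exact omega_fwd hF ih

lemma closure_image_subset_cpt [CompactSpace X] [T2Space X] {g : X → X}
    (hg : Continuous g) (S : Set X) : closure (g '' S) ⊆ g '' closure S :=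
  closure_minimal (Set.image_mono subset_closure)
    (isClosed_closure.isCompact.image hg).isClosed

variable {γ : X} {U : Set X}

lemma sink_image_sub (hγU : IsTopSink F γ U) : F '' U ⊆ U := fun y ⟨u, hu, e⟩ =>
  hγU.2.2.2.1 ⟨u, subset_closure hu, e⟩

lemma sink_iter_sub (hγU : IsTopSink F γ U) (d : ℕ) : F^[d] '' U ⊆ U := by
  induction d with
  | zero => simp
  | succ d ih =>
    rw [Function.iterate_succ', Set.image_comp]
    exact (Set.image_mono ih).trans (sink_image_sub hγU)

lemma sink_iter_mono (hγU : IsTopSink F γ U) (j d : ℕ) :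
    F^[j + d] '' U ⊆ F^[j] '' U := by
  rw [Function.iterate_add, Set.image_comp]
  exact Set.image_mono (sink_iter_sub hγU d)

lemma sink_omega [CompactSpace X] [T2Space X] (hF : Continuous F)
    (hγU : IsTopSink F γ U) {x : X} (hx : ∃ N, F^[N] x ∈ U) :
    omegaSet F x ⊆ orbitSet F γ := by
  obtain ⟨N, hN⟩ := hx
  rw [← hγU.2.2.2.2]
  intro q hq
  apply Set.mem_iInter.2
  intro j
  have htail : (fun n => F^[n] x) '' Set.Ici (N + (j + 1)) ⊆ F^[j + 1] '' U := by
    rintro _ ⟨n, hn, rfl⟩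
    simp only [Set.mem_Ici] at hn
    have h0 : F^[n] x = F^[n - N] (F^[N] x) := by
      rw [← Function.iterate_add_apply]; congr 1; omega
    have h1 : F^[n - N] '' U ⊆ F^[j + 1] '' U := by
      have he : n - N = (j + 1) + (n - N - (j + 1)) := by omega
      rw [he]; exact sink_iter_mono hγU (j + 1) _
    exact h1 ⟨F^[N] x, hN, by simp [← h0]⟩
  have hq2 : q ∈ closure (F^[j + 1] '' U) :=
    closure_mono htail (mem_omega_tail hq (N + (j + 1)))
  have hq3 : q ∈ F^[j + 1] '' closure U :=
    closure_image_subset_cpt (cont_iter hF (j + 1)) U hq2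
  rw [Function.iterate_succ, Set.image_comp] at hq3
  exact Set.image_mono hγU.2.2.2.1 hq3

lemma omega_basin_mem (hF : Continuous F) (hγU : IsTopSink F γ U) {x w : X}
    (hw : w ∈ omegaSet F x) (hwb : w ∈ basin F U) : ∃ N, F^[N] x ∈ U := by
  obtain ⟨k, hk⟩ := Set.mem_iUnion.1 hwb
  have h1 : F^[k] w ∈ omegaSet F x := omega_fwd_iter hF hw k
  have h2 := mem_omega_tail h1 0
  obtain ⟨y, hyU, hy⟩ := _root_.mem_closure_iff.1 h2 U hγU.2.1 hk
  obtain ⟨n, -, rfl⟩ := hy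
  exact ⟨n, hyU⟩

lemma orbit_return {m : ℕ} (hm1 : 1 ≤ m) (hm : F^[m] γ = γ) {q : X}
    (hq : q ∈ orbitSet F γ) : ∃ t, F^[t] q = γ := by
  obtain ⟨i, rfl⟩ := hq
  refine ⟨m * (i + 1) - i, ?_⟩
  rw [← Function.iterate_add_apply]
  have he : m * (i + 1) - i + i = m * (i + 1) := by
    have : i + 1 ≤ m * (i + 1) := Nat.le_mul_of_pos_left _ hm1
    omega
  rw [he, Function.iterate_mul]
  exact Function.iterate_fixed hm (i + 1)

lemma orbit_finite {m : ℕ} (hm1 : 1 ≤ m) (hm : F^[m] γ = γ) :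
    (orbitSet F γ).Finite := by
  apply Set.Finite.subset ((Set.finite_Iio m).image fun i : ℕ => F^[i] γ)
  rintro _ ⟨i, rfl⟩
  refine ⟨i % m, Nat.mod_lt i hm1, ?_⟩
  show F^[i % m] γ = F^[i] γ
  conv_rhs => rw [← Nat.mod_add_div i m]
  rw [Function.iterate_add_apply, Function.iterate_mul, Function.iterate_fixed hm]

end Aux


/-- Abstract form of Proposition 3.1. -/
theorem stmt0 {X : Type*} [MetricSpace X] [CompactSpace X]
    [MeasurableSpace X] [BorelSpace X]
    (F : X ≃ₜ X) (μ : Measure X)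
    (hμ : ∀ V : Set X, IsOpen V → V.Nonempty → 0 < μ V)
    (A : Set X) (hA : IsMilnorAttractor μ (⇑F) A)
    (γseq : ℕ → X) (Useq : ℕ → Set X)
    (hsinks : ∀ j, IsTopSink (⇑F) (γseq j) (Useq j))
    (p : X) (hp : Tendsto γseq atTop (nhds p))
    (γ : X) (U : Set X) (hγU : IsTopSink (⇑F) γ U)
    (z : X) (hz : z ∈ basin (⇑F) U) (hznot : z ∉ orbitSet (⇑F) γ)
    (hcl : MapClusterPt p atTop fun n => (⇑F.symm)^[n] z) :
    ¬ IsLyapunovStable (⇑F) A := by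
  intro hs
  have hF : Continuous (⇑F) := F.continuous
  have hbasin_open : ∀ U' : Set X, IsOpen U' → IsOpen (basin (⇑F) U') := fun U' hU' =>
    isOpen_iUnion fun n => (cont_iter hF n).isOpen_preimage _ hU'
  -- z is not in A
  have hzA : z ∉ A := by
    intro hzA
    obtain ⟨m, hm1, hm⟩ := hγU.1
    set A' := (A ∩ (basin (⇑F) U)ᶜ) ∪ orbitSet (⇑F) γ with hA'
    have hclosed : IsClosed A' :=
      (hA.1.inter (hbasin_open U hγU.2.1).isClosed_compl).union (orbit_finite hm1 hm).isClosed
    have hae : ∀ᵐ x ∂μ, omegaSet (⇑F) x ⊆ A' := by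
      filter_upwards [hA.2.1] with x hx
      by_cases h : ∃ w ∈ omegaSet (⇑F) x, w ∈ basin (⇑F) U
      · obtain ⟨w, hw, hwb⟩ := h
        exact (sink_omega hF hγU (omega_basin_mem hF hγU hw hwb)).trans Set.subset_union_right
      · intro q hq
        exact Or.inl ⟨hx hq, fun hb => h ⟨q, hq, hb⟩⟩
    rcases hA.2.2 A' hclosed hae hzA with ⟨-, hnb⟩ | horbz
    · exact hnb hz
    · exact hznot horbz
  -- each γseq j belongs to A
  have hγA : ∀ j, γseq j ∈ A := by
    intro j
    have hS := hsinks j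
    obtain ⟨m, hm1, hm⟩ := hS.1
    have hbo : IsOpen (basin (⇑F) (Useq j)) := hbasin_open _ hS.2.1
    have hbne : (basin (⇑F) (Useq j)).Nonempty :=
      ⟨γseq j, Set.mem_iUnion.2 ⟨0, hS.2.2.1 ⟨0, rfl⟩⟩⟩
    have hpos := hμ _ hbo hbne
    have hmeas0 : μ {x | ¬ omegaSet (⇑F) x ⊆ A} = 0 := ae_iff.1 hA.2.1
    have hx : ∃ x ∈ basin (⇑F) (Useq j), omegaSet (⇑F) x ⊆ A := by
      by_contra hc
      push_neg at hc
      have hsubset : basin (⇑F) (Useq j) ⊆ {x | ¬ omegaSet (⇑F) x ⊆ A} :=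
        fun x hxb => hc x hxb
      have : μ (basin (⇑F) (Useq j)) = 0 :=
        le_antisymm ((measure_mono hsubset).trans hmeas0.le) zero_le
      exact hpos.ne' this
    obtain ⟨x, hxb, hxA⟩ := hx
    obtain ⟨N, hN⟩ := Set.mem_iUnion.1 hxb
    have hsub := sink_omega hF hS ⟨N, hN⟩
    obtain ⟨q, hq⟩ := omega_nonempty (F := ⇑F) x
    obtain ⟨t, ht⟩ := orbit_return hm1 hm (hsub hq)
    have hmem : F^[t] q ∈ omegaSet (⇑F) x := omega_fwd_iter hF hq t
    rw [ht] at hmem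
    exact hxA hmem
  have hpA : p ∈ A := hA.1.mem_of_tendsto hp (Filter.Eventually.of_forall hγA)
  -- instability contradiction with V = {z}ᶜ
  have hAV : A ⊆ ({z} : Set X)ᶜ := fun a ha he => hzA (by
    rw [Set.mem_singleton_iff] at he
    exact he ▸ ha)
  obtain ⟨W, hWopen, hAW, hWinv⟩ := hs ({z} : Set X)ᶜ isOpen_compl_singleton hAV
  obtain ⟨n, hn⟩ := (mapClusterPt_iff_frequently.1 hcl W (hWopen.mem_nhds (hAW hpA))).exists
  have h2 := hWinv _ hn n
  have h3 : F^[n] ((⇑F.symm)^[n] z) = z :=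
    (Function.LeftInverse.iterate F.apply_symm_apply n) z
  rw [h3] at h2
  exact h2 rfl
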